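/- Let V be a finite ground set, f : Finset V → ℝ a nonnegative function, c ∈ [0,1], and S ⊆ V a finite set. Let x ∈ [0,1]^V satisfy x_e ≤ c for every e ∈ V. Then the Lovász extension satisfies f⁻((x + 1_S)/2) ≥ ((1 − c)/2)·f(S). -/

import Mathlib

open MeasureTheory

/-- The Lovász extension of a set function `f`:
`f⁻(x) = ∫₀¹ f({e : x_e ≥ θ}) dθ`. -/
noncomputable def lovaszExt {V : Type*} [Fintype V] (f : Finset V → ℝ) (x : V → ℝ) : ℝ :=
  ∫ θ in (0:ℝ)..1, f (Finset.univ.filter (fun e => θ ≤ x e))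

/-- for a nonnegative `f`, if `x ∈ [0,1]^V` with `x_e ≤ c` for all `e`, then
`f⁻((x + 1_S)/2) ≥ ((1 - c)/2)·f(S)`. -/
theorem stmt10 {V : Type*} [Fintype V] [DecidableEq V]
    (f : Finset V → ℝ)
    (hnn : ∀ S : Finset V, 0 ≤ f S)
    (c : ℝ) (hc : c ∈ Set.Icc (0:ℝ) 1)
    (S : Finset V)
    (x : V → ℝ) (hx : ∀ e, x e ∈ Set.Icc (0:ℝ) 1) (hxc : ∀ e, x e ≤ c) :
    lovaszExt f (fun e => (x e + (if e ∈ S then (1:ℝ) else 0)) / 2)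
      ≥ ((1 - c) / 2) * f S := by
  set y : V → ℝ := fun e => (x e + (if e ∈ S then (1:ℝ) else 0)) / 2 with hy
  set g : ℝ → ℝ := fun θ => f (Finset.univ.filter (fun e => θ ≤ y e)) with hgdef
  -- measurability of g
  have key : ∀ T : Finset V,
      MeasurableSet {θ : ℝ | Finset.univ.filter (fun e => θ ≤ y e) = T} := by
    intro T
    have hEq : {θ : ℝ | Finset.univ.filter (fun e => θ ≤ y e) = T}
        = ⋂ e : V, {θ : ℝ | θ ≤ y e ↔ e ∈ T} := by
      ext θ
      simp only [Set.mem_setOf_eq, Set.mem_iInter, Finset.ext_iff, Finset.mem_filter,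
        Finset.mem_univ, true_and]
    rw [hEq]
    refine MeasurableSet.iInter (fun e => ?_)
    by_cases he : e ∈ T
    · simp only [he, iff_true]
      exact measurableSet_Iic
    · simp only [he, iff_false, not_le]
      exact measurableSet_Ioi
  have hg : Measurable g := by
    have hrepr : g = fun θ => ∑ T : Finset V,
        if Finset.univ.filter (fun e => θ ≤ y e) = T then f T else 0 := by
      funext θ
      rw [Finset.sum_ite_eq]
      simp [hgdef]
    rw [hrepr]
    exact Finset.measurable_sum _ (fun T _ =>
      Measurable.ite (key T) measurable_const measurable_const)
  -- interval integrability of g on any interval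
  have hC : ∀ θ : ℝ, ‖g θ‖ ≤ ∑ T : Finset V, ‖f T‖ := by
    intro θ
    exact Finset.single_le_sum (f := fun T => ‖f T‖) (fun T _ => norm_nonneg _)
      (Finset.mem_univ _)
  have hint : ∀ a b : ℝ, IntervalIntegrable g volume a b := by
    intro a b
    constructor <;>
    · apply Measure.integrableOn_of_bounded (M := ∑ T : Finset V, ‖f T‖)
      · exact ((measure_mono Set.Ioc_subset_Icc_self).trans_lt
          (by rw [Real.volume_Icc]; exact ENNReal.ofReal_lt_top)).ne
      · exact hg.aestronglyMeasurable
      · exact Filter.Eventually.of_forall hC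
  have hgnn : ∀ θ : ℝ, 0 ≤ g θ := fun θ => hnn _
  have hc0 : (0:ℝ) ≤ c := hc.1
  have hc1 : c ≤ 1 := hc.2
  have h1 : (0:ℝ) ≤ c / 2 := by linarith
  have h2 : c / 2 ≤ 1 / 2 := by linarith
  have h3 : (1:ℝ) / 2 ≤ 1 := by norm_num
  -- split integral
  have hsplit : lovaszExt f y
      = (∫ θ in (0:ℝ)..(c/2), g θ) + (∫ θ in (c/2)..(1/2), g θ)
        + (∫ θ in (1/2:ℝ)..1, g θ) := by
    rw [lovaszExt]
    rw [← intervalIntegral.integral_add_adjacent_intervals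
        (((hint 0 (c/2)).trans (hint (c/2) (1/2)))) (hint (1/2) 1),
      ← intervalIntegral.integral_add_adjacent_intervals (hint 0 (c/2)) (hint (c/2) (1/2))]
  have hpos1 : 0 ≤ ∫ θ in (0:ℝ)..(c/2), g θ :=
    intervalIntegral.integral_nonneg h1 (fun u _ => hgnn u)
  have hpos3 : 0 ≤ ∫ θ in (1/2:ℝ)..1, g θ :=
    intervalIntegral.integral_nonneg h3 (fun u _ => hgnn u)
  -- middle piece equals ((1-c)/2) * f S
  have hmid : (∫ θ in (c/2)..(1/2), g θ) = ((1 - c) / 2) * f S := by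
    have heq : Set.EqOn g (fun _ => f S) (Set.Ioc (c/2) (1/2)) := by
      intro θ hθ
      have hθ1 : c/2 < θ := hθ.1
      have hθ2 : θ ≤ 1/2 := hθ.2
      simp only [hgdef]
      congr 1
      ext e
      simp only [Finset.mem_filter, Finset.mem_univ, true_and, hy]
      by_cases he : e ∈ S
      · simp only [he, if_true, iff_true]
        have := (hx e).1
        linarith
      · simp only [he, if_false, iff_false, not_le]
        have := hxc e
        linarith
    rw [intervalIntegral.integral_of_le h2,
      setIntegral_congr_fun measurableSet_Ioc heq]
    rw [setIntegral_const, measureReal_def, Real.volume_Ioc, ENNReal.toReal_ofReal (by linarith),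
      smul_eq_mul]
    ring
  rw [hsplit, hmid]
  linarith
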